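/- Let K ∈ ℝ, N ∈ (1,∞), D > 0, and assume that it is NOT the case that K > 0 and D = π√((N−1)/K) (i.e. either K ≤ 0, or K > 0 and D < π√((N−1)/K)). Then for every a ∈ (0,D), the function h^a_{K,N,D} is not a CD(K,N)-density on [0,D]. -/
import Mathlib


open MeasureTheory Filter

noncomputable section

/-- The comparison function `s_κ(θ)`:
`sin(√κ·θ)/√κ` if `κ > 0`, `θ` if `κ = 0`, `sinh(√(−κ)·θ)/√(−κ)` if `κ < 0`. -/
def sK (κ θ : ℝ) : ℝ :=
  if 0 < κ then Real.sin (Real.sqrt κ * θ) / Real.sqrt κ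
  else if κ = 0 then θ
  else Real.sinh (Real.sqrt (-κ) * θ) / Real.sqrt (-κ)

/-- `h` is an `MCP(K,N)`-density on the interval `I ⊆ ℝ`: it is a nonnegative Borel
function satisfying
`h(t·x₁+(1−t)·x₀) ≥ (s_{K/(N−1)}((1−t)|x₁−x₀|)/s_{K/(N−1)}(|x₁−x₀|))^{N−1}·h(x₀)`
for all `x₀, x₁ ∈ I`, `t ∈ [0,1]`; when `x₀ = x₁` the coefficient is interpreted as `1−t`,
and when `K > 0` and `|x₁−x₀| ≥ π√((N−1)/K)` the coefficient is `+∞`, forcing `h x₀ = 0`. -/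
def IsMCPDensity (K N : ℝ) (I : Set ℝ) (h : ℝ → ℝ) : Prop :=
  Measurable h ∧ (∀ x ∈ I, 0 ≤ h x) ∧
  ∀ x₀ ∈ I, ∀ x₁ ∈ I, ∀ t ∈ Set.Icc (0:ℝ) 1,
    (x₀ = x₁ → (1 - t) * h x₀ ≤ h x₀) ∧
    (x₀ ≠ x₁ →
      ((0 < K ∧ Real.pi * Real.sqrt ((N - 1) / K) ≤ |x₁ - x₀|) → h x₀ = 0) ∧
      (¬(0 < K ∧ Real.pi * Real.sqrt ((N - 1) / K) ≤ |x₁ - x₀|) →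
        (sK (K / (N - 1)) ((1 - t) * |x₁ - x₀|) / sK (K / (N - 1)) |x₁ - x₀|) ^ (N - 1) * h x₀
          ≤ h (t * x₁ + (1 - t) * x₀)))

/-- `h` is a `CD(K,N)`-density on the interval `I ⊆ ℝ`. -/
def IsCDDensity (K N : ℝ) (I : Set ℝ) (h : ℝ → ℝ) : Prop :=
  (∀ x ∈ I, 0 ≤ h x) ∧
  ∀ x₀ ∈ I, ∀ x₁ ∈ I, x₀ < x₁ → ∀ t ∈ Set.Icc (0:ℝ) 1,
    (sK (K / (N - 1)) ((1 - t) * (x₁ - x₀)) / sK (K / (N - 1)) (x₁ - x₀)) * h x₀ ^ (1 / (N - 1))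
      + (sK (K / (N - 1)) (t * (x₁ - x₀)) / sK (K / (N - 1)) (x₁ - x₀)) * h x₁ ^ (1 / (N - 1))
      ≤ h ((1 - t) * x₀ + t * x₁) ^ (1 / (N - 1))

/-- The lower-bound function `f_{K,N,D}`. -/
def fKND (K N D : ℝ) (x : ℝ) : ℝ :=
  if x = 0 ∨ x = D then 0
  else ((∫ y in (0:ℝ)..x, (sK (K / (N - 1)) (D - y) / sK (K / (N - 1)) (D - x)) ^ (N - 1)) +
        (∫ y in x..D, (sK (K / (N - 1)) y / sK (K / (N - 1)) x) ^ (N - 1)))⁻¹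

/-- The model density `h^a_{K,N,D}`. -/
def hKND (K N D a : ℝ) (x : ℝ) : ℝ :=
  if x ≤ a then fKND K N D a * (sK (K / (N - 1)) (D - x) / sK (K / (N - 1)) (D - a)) ^ (N - 1)
  else fKND K N D a * (sK (K / (N - 1)) x / sK (K / (N - 1)) a) ^ (N - 1)

/-- `v_{K,N,D}(a) = ∫₀ᵃ h^a_{K,N,D}(x) dx`. -/
def vKND (K N D a : ℝ) : ℝ := ∫ x in (0:ℝ)..a, hKND K N D a x

/-- The (outer) Minkowski content of `A` with respect to `μ`:
`liminf_{ε→0⁺} (μ(Aᵉ) − μ(A))/ε` where `Aᵉ` is the open `ε`-neighbourhood of `A`. -/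
def mink (μ : Measure ℝ) (A : Set ℝ) : ℝ :=
  Filter.liminf (fun ε : ℝ => ((μ (Metric.thickening ε A)).toReal - (μ A).toReal) / ε)
    (nhdsWithin 0 (Set.Ioi 0))

/-- The measure `μ_h = h · Leb` restricted to `[0,D]`. -/
def muh (h : ℝ → ℝ) (D : ℝ) : Measure ℝ :=
  (volume.restrict (Set.Icc (0:ℝ) D)).withDensity (fun x => ENNReal.ofReal (h x))

/-- The restricted one-dimensional isoperimetric profile `Ĩ_{K,N,D}(v)` over
`MCP(K,N)`-densities on `[0,D]` integrating to `1`. -/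
def Itilde (K N D v : ℝ) : ℝ :=
  sInf { p : ℝ | ∃ h : ℝ → ℝ, IsMCPDensity K N (Set.Icc 0 D) h ∧
    (∫ x in (0:ℝ)..D, h x) = 1 ∧
    ∃ A : Set ℝ, MeasurableSet A ∧ A ⊆ Set.Icc 0 D ∧ (muh h D A).toReal = v ∧
      p = mink (muh h D) A }

/-- The restricted one-dimensional isoperimetric profile `Ĩ^{CD}_{K,N,D}(v)` over
`CD(K,N)`-densities on `[0,D]` integrating to `1`. -/
def ItildeCD (K N D v : ℝ) : ℝ :=
  sInf { p : ℝ | ∃ h : ℝ → ℝ, IsCDDensity K N (Set.Icc 0 D) h ∧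
    (∫ x in (0:ℝ)..D, h x) = 1 ∧
    ∃ A : Set ℝ, MeasurableSet A ∧ A ⊆ Set.Icc 0 D ∧ (muh h D A).toReal = v ∧
      p = mink (muh h D) A }


lemma sK_cont (κ : ℝ) : Continuous (sK κ) := by
  unfold sK
  split_ifs <;> fun_prop

/-- Lemma: except in the case `K > 0` with `D = π√((N−1)/K)`, the model density
`h^a_{K,N,D}` is not a `CD(K,N)`-density on `[0,D]`. -/
theorem hKND_not_cd_density (K N D : ℝ) (hN : 1 < N) (hD : 0 < D)
    (hDK : 0 < K → D < Real.pi * Real.sqrt ((N - 1) / K)) :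
    ∀ a ∈ Set.Ioo (0:ℝ) D, ¬ IsCDDensity K N (Set.Icc 0 D) (hKND K N D a) := by
  intro a ha hcd
  obtain ⟨ha0, haD⟩ := ha
  have hN1 : (0:ℝ) < N - 1 := by linarith
  set κ := K / (N - 1) with hκdef
  have key : ∀ θ : ℝ, 0 < θ → θ ≤ D → 0 < sK κ θ := by
    intro θ hθ hθD
    unfold sK
    split_ifs with h1 h2
    · have hK : 0 < K := by
        rcases lt_trichotomy K 0 with h | h | h
        · exfalso; have : κ < 0 := div_neg_of_neg_of_pos h hN1; linarith
        · exfalso; rw [hκdef, h] at h1; simp at h1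
        · exact h
      have hsq : Real.sqrt κ * θ < Real.pi := by
        have h2' : Real.sqrt κ * θ ≤ Real.sqrt κ * D :=
          mul_le_mul_of_nonneg_left hθD (Real.sqrt_nonneg _)
        have h3 : Real.sqrt κ * D < Real.sqrt κ * (Real.pi * Real.sqrt ((N-1)/K)) :=
          mul_lt_mul_of_pos_left (hDK hK) (Real.sqrt_pos.mpr h1)
        have h4 : Real.sqrt κ * Real.sqrt ((N-1)/K) = 1 := by
          rw [← Real.sqrt_mul (le_of_lt h1)]
          rw [show κ * ((N-1)/K) = 1 by rw [hκdef]; field_simp]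
          exact Real.sqrt_one
        have h5 : Real.sqrt κ * (Real.pi * Real.sqrt ((N-1)/K)) = Real.pi := by
          rw [mul_comm Real.pi, ← mul_assoc, h4, one_mul]
        linarith
      have hsin : 0 < Real.sin (Real.sqrt κ * θ) :=
        Real.sin_pos_of_pos_of_lt_pi (mul_pos (Real.sqrt_pos.mpr h1) hθ) hsq
      exact div_pos hsin (Real.sqrt_pos.mpr h1)
    · exact hθ
    · have hκneg : κ < 0 := lt_of_le_of_ne (not_lt.mp h1) h2
      have hs : 0 < Real.sinh (Real.sqrt (-κ) * θ) :=
        Real.sinh_pos_iff.mpr (mul_pos (Real.sqrt_pos.mpr (by linarith)) hθ)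
      exact div_pos hs (Real.sqrt_pos.mpr (by linarith))
  have hsDa : 0 < sK κ (D - a) := key _ (by linarith) (by linarith)
  have hsa : 0 < sK κ a := key _ ha0 haD.le
  have hsD : 0 < sK κ D := key _ hD le_rfl
  have hne : ¬ (a = 0 ∨ a = D) := by push_neg; exact ⟨ne_of_gt ha0, ne_of_lt haD⟩
  have hf_pos : 0 < fKND K N D a := by
    unfold fKND
    rw [if_neg hne]
    apply inv_pos.mpr
    apply add_pos
    · apply intervalIntegral.intervalIntegral_pos_of_pos_on
      · apply Continuous.intervalIntegrable
        apply Continuous.rpow_const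
        · exact ((sK_cont κ).comp (continuous_const.sub continuous_id)).div_const _
        · intro x; right; linarith
      · intro x hx
        exact Real.rpow_pos_of_pos
          (div_pos (key _ (by linarith [hx.2]) (by linarith [hx.1])) hsDa) _
      · exact ha0
    · apply intervalIntegral.intervalIntegral_pos_of_pos_on
      · apply Continuous.intervalIntegrable
        apply Continuous.rpow_const
        · exact (sK_cont κ).div_const _
        · intro x; right; linarith
      · intro x hx
        exact Real.rpow_pos_of_pos
          (div_pos (key _ (by linarith [hx.1]) (by linarith [hx.2])) hsa) _
      · exact haD
  obtain ⟨-, hineq⟩ := hcd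
  have h0mem : (0:ℝ) ∈ Set.Icc (0:ℝ) D := ⟨le_rfl, hD.le⟩
  have hDmem : D ∈ Set.Icc (0:ℝ) D := ⟨hD.le, le_rfl⟩
  have ht : a / D ∈ Set.Icc (0:ℝ) 1 :=
    ⟨by positivity, by rw [div_le_one hD]; exact haD.le⟩
  have hmain := hineq 0 h0mem D hDmem hD (a/D) ht
  simp only [sub_zero] at hmain
  have e1 : (1 - a/D) * D = D - a := by field_simp
  have e2 : (a/D) * D = a := by field_simp
  have e3 : (1 - a/D) * 0 + a = a := by ring
  rw [e1, e2, e3] at hmain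
  have hh0 : hKND K N D a 0 = fKND K N D a * (sK κ D / sK κ (D-a))^(N-1) := by
    unfold hKND; rw [if_pos ha0.le, sub_zero]
  have hhD : hKND K N D a D = fKND K N D a * (sK κ D / sK κ a)^(N-1) := by
    unfold hKND; rw [if_neg (not_le.mpr haD)]
  have hha : hKND K N D a a = fKND K N D a := by
    unfold hKND; rw [if_pos le_rfl, div_self hsDa.ne', Real.one_rpow, mul_one]
  have hinv : (N-1) * (1/(N-1)) = 1 := by field_simp
  have pow_cancel : ∀ b : ℝ, 0 < b → (b ^ (N-1)) ^ (1/(N-1)) = b := by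
    intro b hb
    rw [← Real.rpow_mul hb.le, hinv, Real.rpow_one]
  have hexp0 : (hKND K N D a 0) ^ (1/(N-1))
      = fKND K N D a ^ (1/(N-1)) * (sK κ D / sK κ (D-a)) := by
    rw [hh0, Real.mul_rpow hf_pos.le (Real.rpow_nonneg (by positivity) _),
      pow_cancel _ (div_pos hsD hsDa)]
  have hexpD : (hKND K N D a D) ^ (1/(N-1))
      = fKND K N D a ^ (1/(N-1)) * (sK κ D / sK κ a) := by
    rw [hhD, Real.mul_rpow hf_pos.le (Real.rpow_nonneg (by positivity) _),
      pow_cancel _ (div_pos hsD hsa)]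
  rw [hexp0, hexpD, hha] at hmain
  have hF : 0 < fKND K N D a ^ (1/(N-1)) := Real.rpow_pos_of_pos hf_pos _
  have hsum : (sK κ (D-a) / sK κ D) * (fKND K N D a ^ (1/(N-1)) * (sK κ D / sK κ (D-a)))
      + (sK κ a / sK κ D) * (fKND K N D a ^ (1/(N-1)) * (sK κ D / sK κ a))
      = 2 * fKND K N D a ^ (1/(N-1)) := by
    field_simp
    ring
  rw [hsum] at hmain
  linarith

end
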